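/- Let d ≥ 1. In the field of fractions of the polynomial ring ℂ[z,t], the following partial fraction decomposition holds: (1−t²)/∏_{m=0}^{d}(1−z·t^{2m}) = Σ_{k=0}^{d} R_k(t)/(1−z·t^{2k}), where R_k(t) = (−1)^k · t^{k(k+1)} · (1−t²) / ((t²;t²)_k · (t²;t²)_{d−k}). -/
import Mathlib
set_option synthInstance.maxHeartbeats 1000000
set_option maxHeartbeats 1000000


/-- The image of z in the fraction field of ℂ[z,t]. -/
noncomputable def Zfrac : FractionRing (MvPolynomial (Fin 2) ℂ) :=
  algebraMap (MvPolynomial (Fin 2) ℂ) _ (MvPolynomial.X 0)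

/-- The image of t in the fraction field of ℂ[z,t]. -/
noncomputable def Tfrac : FractionRing (MvPolynomial (Fin 2) ℂ) :=
  algebraMap (MvPolynomial (Fin 2) ℂ) _ (MvPolynomial.X 1)

/-- The q-shifted factorial (t²;t²)_k = (1−t²)(1−t⁴)⋯(1−t^{2k}). -/
noncomputable def qfac (k : ℕ) : FractionRing (MvPolynomial (Fin 2) ℂ) :=
  ∏ j ∈ Finset.range k, (1 - Tfrac ^ (2 * (j + 1)))

abbrev KK := FractionRing (MvPolynomial (Fin 2) ℂ)
abbrev RR := MvPolynomial (Fin 2) ℂ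

lemma T_ne (j : ℕ) (hj : 1 ≤ j) : (1 : KK) - Tfrac ^ j ≠ 0 := by
  have e : (1:KK) - Tfrac ^ j = algebraMap RR KK (1 - MvPolynomial.X 1 ^ j) := by
    rw [RingHom.map_sub, RingHom.map_pow, RingHom.map_one, Tfrac]
  have h : (1 : RR) - MvPolynomial.X 1 ^ j ≠ 0 := by
    intro h
    have := congrArg (MvPolynomial.eval (fun _ => (0:ℂ))) h
    simp [zero_pow (Nat.one_le_iff_ne_zero.mp hj)] at this
  rw [e]
  intro h0
  exact h (IsFractionRing.injective RR KK (by simpa using h0))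

lemma ZT_ne (m : ℕ) : (1 : KK) - Zfrac * Tfrac ^ m ≠ 0 := by
  have e : (1:KK) - Zfrac * Tfrac ^ m
      = algebraMap RR KK (1 - MvPolynomial.X 0 * MvPolynomial.X 1 ^ m) := by
    rw [RingHom.map_sub, RingHom.map_mul, RingHom.map_pow, RingHom.map_one, Tfrac, Zfrac]
  have h : (1 : RR) - MvPolynomial.X 0 * MvPolynomial.X 1 ^ m ≠ 0 := by
    intro h
    have := congrArg (MvPolynomial.eval (fun _ => (0:ℂ))) h
    simp at this
  rw [e]
  intro h0
  exact h (IsFractionRing.injective RR KK (by simpa using h0))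

lemma qfac_ne (k : ℕ) : qfac k ≠ 0 := by
  unfold qfac
  exact Finset.prod_ne_zero_iff.mpr fun j _ => T_ne _ (by omega)

lemma qfac_succ (k : ℕ) : qfac (k+1) = qfac k * (1 - Tfrac ^ (2*(k+1))) :=
  Finset.prod_range_succ _ _

/-- Telescoping auxiliary function for the q-binomial identity. -/
noncomputable def Wtel (n k : ℕ) : KK :=
  if 1 ≤ k ∧ k ≤ n then
    (-1:KK)^(k-1) * Tfrac^((k-1)*k) / (qfac (k-1) * qfac (n-k)) else 0

lemma step (n k : ℕ) (hn : 1 ≤ n) (hk : k ≤ n) :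
    (1 - Tfrac^(2*n)) * ((-1:KK)^k * Tfrac^(k*(k-1)) / (qfac k * qfac (n-k)))
      = Wtel n (k+1) - Wtel n k := by
  rcases Nat.lt_or_ge k n with hkn | hge
  swap
  · -- k = n
    have heq : k = n := le_antisymm hk hge
    subst heq
    obtain ⟨m, rfl⟩ : ∃ m, k = m + 1 := ⟨k - 1, by omega⟩
    rw [Wtel, if_neg (by omega), Wtel, if_pos ⟨by omega, le_refl _⟩]
    simp only [Nat.add_sub_cancel, Nat.sub_self]
    have hq : qfac (m+1) = qfac m * (1 - Tfrac ^ (2*(m+1))) := qfac_succ m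
    have h1 : qfac 0 = (1:KK) := by simp [qfac]
    rw [hq, h1, pow_succ]
    have hT : (1:KK) - Tfrac ^ (2*(m+1)) ≠ 0 := T_ne _ (by omega)
    have hqm : qfac m ≠ 0 := qfac_ne m
    rw [Nat.mul_comm (m+1) m]
    field_simp
    ring
  · rcases Nat.eq_zero_or_pos k with rfl | hk1
    · -- k = 0
      obtain ⟨m, rfl⟩ : ∃ m, n = m + 1 := ⟨n - 1, by omega⟩
      rw [Wtel, if_pos ⟨le_refl _, by omega⟩, Wtel, if_neg (by omega)]
      simp only [Nat.sub_zero, Nat.sub_self, Nat.add_sub_cancel]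
      have hq : qfac (m+1) = qfac m * (1 - Tfrac ^ (2*(m+1))) := qfac_succ m
      have h1 : qfac 0 = (1:KK) := by simp [qfac]
      rw [hq, h1]
      have hT : (1:KK) - Tfrac ^ (2*(m+1)) ≠ 0 := T_ne _ (by omega)
      have hqm : qfac m ≠ 0 := qfac_ne m
      field_simp
      ring
    · -- 1 ≤ k < n
      obtain ⟨j, rfl⟩ : ∃ j, k = j + 1 := ⟨k - 1, by omega⟩
      obtain ⟨m, hm⟩ : ∃ m, n = j + m + 2 := ⟨n - j - 2, by omega⟩
      subst hm
      rw [Wtel, if_pos ⟨by omega, by omega⟩, Wtel, if_pos ⟨by omega, by omega⟩]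
      have e1 : j + m + 2 - (j + 1 + 1) = m := by omega
      have e2 : j + m + 2 - (j + 1) = m + 1 := by omega
      have e3 : (j+1+1-1) = j + 1 := by omega
      have e4 : (j+1-1) = j := by omega
      rw [e1, e2, e3, e4, Nat.mul_comm (j+1) j]
      have hA : Tfrac ^ (2*(j+m+2)) = Tfrac^(2*(j+1)) * Tfrac^(2*(m+1)) := by
        rw [← pow_add]; congr 1; omega
      have hB : Tfrac ^ ((j+1)*(j+1+1)) = Tfrac^(j*(j+1)) * Tfrac^(2*(j+1)) := by
        rw [← pow_add]; congr 1; ring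
      rw [hA, hB, qfac_succ j, qfac_succ m, pow_succ]
      have hT1 : (1:KK) - Tfrac ^ (2*(j+1)) ≠ 0 := T_ne _ (by omega)
      have hT2 : (1:KK) - Tfrac ^ (2*(m+1)) ≠ 0 := T_ne _ (by omega)
      have hq1 : qfac j ≠ 0 := qfac_ne j
      have hq2 : qfac m ≠ 0 := qfac_ne m
      field_simp
      ring

lemma lemA (n : ℕ) (hn : 1 ≤ n) :
    ∑ k ∈ Finset.range (n+1), ((-1:KK)^k * Tfrac^(k*(k-1)) / (qfac k * qfac (n-k))) = 0 := by
  have h1 : (1 - Tfrac^(2*n)) *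
      ∑ k ∈ Finset.range (n+1), ((-1:KK)^k * Tfrac^(k*(k-1)) / (qfac k * qfac (n-k)))
      = ∑ k ∈ Finset.range (n+1), (Wtel n (k+1) - Wtel n k) := by
    rw [Finset.mul_sum]
    exact Finset.sum_congr rfl fun k hk =>
      step n k hn (by have := Finset.mem_range.mp hk; omega)
  rw [Finset.sum_range_sub] at h1
  have h2 : Wtel n (n+1) - Wtel n 0 = 0 := by
    rw [Wtel, if_neg (by omega), Wtel, if_neg (by omega)]; simp
  rw [h2] at h1
  exact (mul_eq_zero.mp h1).resolve_left (T_ne _ (by omega))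

lemma sum_e (d : ℕ) :
    ∑ k ∈ Finset.range (d+1),
      (-(Tfrac^(2*(d+1))) * ((-1:KK)^k * Tfrac^(k*(k-1)) / (qfac k * qfac (d+1-k))))
    = (-1:KK)^(d+1) * Tfrac^((d+1)*(d+2)) / qfac (d+1) := by
  have h := lemA (d+1) (by omega)
  rw [Finset.sum_range_succ] at h
  have h2 : ∑ k ∈ Finset.range (d+1), ((-1:KK)^k * Tfrac^(k*(k-1)) / (qfac k * qfac (d+1-k)))
      = -((-1:KK)^(d+1) * Tfrac^((d+1)*(d+1-1)) / (qfac (d+1) * qfac (d+1-(d+1)))) := by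
    exact eq_neg_of_add_eq_zero_left h
  rw [← Finset.mul_sum, h2]
  have e1 : d + 1 - (d+1) = 0 := by omega
  have e2 : (d+1)*(d+1-1) = (d+1)*d := by simp
  rw [e1, e2]
  have h0 : qfac 0 = (1:KK) := by simp [qfac]
  rw [h0]
  have e3 : Tfrac^((d+1)*(d+2)) = Tfrac^(2*(d+1)) * Tfrac^((d+1)*d) := by
    rw [← pow_add]; congr 1; ring
  rw [e3]
  ring

lemma frac_split {F : Type*} [Field F] (Z C D P s q1 q2 : F) (hq1 : q1 ≠ 0) (hq2 : q2 ≠ 0)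
    (hD : 1 - D ≠ 0) (hu : 1 - Z*C ≠ 0) (hv : 1 - Z*(C*D) ≠ 0) :
    (s * (P*C) / (q1*q2)) / ((1 - Z*C) * (1 - Z*(C*D)))
      = (s * (P*C) / (q1*(q2*(1-D)))) / (1 - Z*C)
        + (-(C*D) * (s * P / (q1*(q2*(1-D))))) / (1 - Z*(C*D)) := by
  have hQ : q1 * (q2 * (1 - D)) ≠ 0 := mul_ne_zero hq1 (mul_ne_zero hq2 hD)
  have h1 : q1 * q2 ≠ 0 := mul_ne_zero hq1 hq2
  rw [div_div, ← mul_div_assoc, div_div, div_div,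
      div_add_div _ _ (mul_ne_zero hQ hu) (mul_ne_zero hQ hv),
      div_eq_div_iff (mul_ne_zero h1 (mul_ne_zero hu hv))
        (mul_ne_zero (mul_ne_zero hQ hu) (mul_ne_zero hQ hv))]
  ring

lemma termB (k m : ℕ) :
    ((-1:KK)^k * Tfrac^(k*(k+1)) / (qfac k * qfac m)) /
        ((1 - Zfrac*Tfrac^(2*k)) * (1 - Zfrac*Tfrac^(2*(k+m+1))))
      = ((-1:KK)^k * Tfrac^(k*(k+1)) / (qfac k * qfac (m+1))) / (1 - Zfrac*Tfrac^(2*k))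
        + (-(Tfrac^(2*(k+m+1))) * ((-1:KK)^k * Tfrac^(k*(k-1)) / (qfac k * qfac (m+1)))) /
            (1 - Zfrac*Tfrac^(2*(k+m+1))) := by
  have eP : Tfrac^(k*(k+1)) = Tfrac^(k*(k-1)) * Tfrac^(2*k) := by
    rw [← pow_add]; congr 1
    cases k with
    | zero => rfl
    | succ j => simp [Nat.succ_sub_one]; ring
  have eB : Tfrac^(2*(k+m+1)) = Tfrac^(2*k) * Tfrac^(2*(m+1)) := by
    rw [← pow_add]; congr 1; ring
  have hu : (1:KK) - Zfrac*Tfrac^(2*k) ≠ 0 := ZT_ne _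
  have hv : (1:KK) - Zfrac*Tfrac^(2*(k+m+1)) ≠ 0 := ZT_ne _
  have hq1 : qfac k ≠ 0 := qfac_ne k
  have hq2 : qfac m ≠ 0 := qfac_ne m
  have hT2 : (1:KK) - Tfrac ^ (2*(m+1)) ≠ 0 := T_ne _ (by omega)
  rw [eB] at hv
  rw [qfac_succ m, eP, eB]
  exact frac_split Zfrac (Tfrac^(2*k)) (Tfrac^(2*(m+1))) (Tfrac^(k*(k-1))) ((-1)^k)
    (qfac k) (qfac m) hq1 hq2 hT2 hu hv

lemma auxmain (d : ℕ) :
    (∏ m ∈ Finset.range (d+1), (1 - Zfrac * Tfrac^(2*m)))⁻¹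
      = ∑ k ∈ Finset.range (d+1),
          ((-1:KK)^k * Tfrac^(k*(k+1)) / (qfac k * qfac (d-k))) / (1 - Zfrac*Tfrac^(2*k)) := by
  induction d with
  | zero => simp [qfac]
  | succ d ih =>
    rw [Finset.prod_range_succ, mul_inv, ih, Finset.sum_mul]
    have key : ∀ k ∈ Finset.range (d+1),
        (((-1:KK)^k * Tfrac^(k*(k+1)) / (qfac k * qfac (d-k))) / (1 - Zfrac*Tfrac^(2*k)))
            * (1 - Zfrac * Tfrac^(2*(d+1)))⁻¹
          = ((-1:KK)^k * Tfrac^(k*(k+1)) / (qfac k * qfac (d+1-k))) / (1 - Zfrac*Tfrac^(2*k))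
            + (-(Tfrac^(2*(d+1))) * ((-1:KK)^k * Tfrac^(k*(k-1)) / (qfac k * qfac (d+1-k)))) /
                (1 - Zfrac*Tfrac^(2*(d+1))) := by
      intro k hk
      have hkd : k ≤ d := by have := Finset.mem_range.mp hk; omega
      obtain ⟨m, rfl⟩ : ∃ m, d = k + m := ⟨d - k, by omega⟩
      have e1 : k + m - k = m := by omega
      have e2 : k + m + 1 - k = m + 1 := by omega
      have e3 : k + m + 1 = k + (m + 1) := by omega
      rw [e1, e2, ← div_eq_mul_inv, div_div]
      exact termB k m
    rw [Finset.sum_congr rfl key, Finset.sum_add_distrib, ← Finset.sum_div, sum_e]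
    conv_rhs => rw [Finset.sum_range_succ]
    have e4 : d + 1 - (d+1) = 0 := by omega
    have h0 : qfac 0 = (1:KK) := by simp [qfac]
    have e5 : (d+1)*(d+1+1) = (d+1)*(d+2) := by ring
    rw [e4, h0, mul_one, e5]

theorem stmt10 (d : ℕ) (hd : 1 ≤ d) :
    (1 - Tfrac ^ 2) / (∏ m ∈ Finset.range (d + 1), (1 - Zfrac * Tfrac ^ (2 * m)))
      = ∑ k ∈ Finset.range (d + 1),
          ((-1 : FractionRing (MvPolynomial (Fin 2) ℂ)) ^ k * Tfrac ^ (k * (k + 1)) *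
              (1 - Tfrac ^ 2) / (qfac k * qfac (d - k)))
            / (1 - Zfrac * Tfrac ^ (2 * k)) := by
  rw [div_eq_mul_inv, auxmain, Finset.mul_sum]
  refine Finset.sum_congr rfl fun k hk => ?_
  ring
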